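/- If the orbit 𝒪 is finite, then (x,y) admits a decoupling in the orbit with rational coefficients: there exist 0-chains γ̃x, γ̃y, α, all with coefficients in ℚ, such that (x,y) = γ̃x + γ̃y + α, σ·γ̃x = γ̃x for all σ ∈ G_x, σ·γ̃y = γ̃y for all σ ∈ G_y, and α cancels decoupled fractions. -/

import Mathlib

open IntermediateField
open scoped BigOperators Classical

set_option synthInstance.maxHeartbeats 1000000
set_option maxHeartbeats 1600000

noncomputable section

namespace QuadrantWalk

variable {K : Type} [Field K] [Algebra ℂ K]

/-- Evaluation of the step (Laurent) polynomial `S(X,Y) = ∑ w_{i,j} X^i Y^j`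
    at a pair of elements of a field. -/
def stepEval (St : Finset (ℤ × ℤ)) (w : ℤ × ℤ → ℂ) (u v : K) : K :=
  ∑ p ∈ St, algebraMap ℂ K (w p) * u ^ p.1 * v ^ p.2

/-- The step polynomial involves both `X` and `Y`. -/
def NotUnivariate (St : Finset (ℤ × ℤ)) : Prop :=
  (∃ p ∈ St, ∃ q ∈ St, p.1 ≠ q.1) ∧ ∃ p ∈ St, ∃ q ∈ St, p.2 ≠ q.2

/-- The kernel polynomial `K̃(X,Y,t) = X^mx * Y^my * (1 - t·S(X,Y))` as an element of
`ℂ[X,Y,t]`, with variables `0 ↦ X`, `1 ↦ Y`, `2 ↦ t`. -/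
def kernelPoly (St : Finset (ℤ × ℤ)) (w : ℤ × ℤ → ℂ) (mx my : ℕ) :
    MvPolynomial (Fin 3) ℂ :=
  MvPolynomial.X 0 ^ mx * MvPolynomial.X 1 ^ my -
    MvPolynomial.X 2 *
      ∑ p ∈ St, MvPolynomial.C (w p) *
        MvPolynomial.X 0 ^ (p.1 + (mx : ℤ)).toNat *
        MvPolynomial.X 1 ^ (p.2 + (my : ℤ)).toNat

/-- `-mx` (resp. `-my`) is the smallest `X`-exponent (resp. `Y`-exponent) of the model. -/
structure ExponentBounds (St : Finset (ℤ × ℤ)) (mx my : ℕ) : Prop where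
  lowerX : ∀ p ∈ St, -(mx : ℤ) ≤ p.1
  lowerY : ∀ p ∈ St, -(my : ℤ) ≤ p.2
  attainX : ∃ p ∈ St, p.1 = -(mx : ℤ)
  attainY : ∃ p ∈ St, p.2 = -(my : ℤ)

/-- `x`-adjacency : equal first coordinates and equal values of `S`. -/
def XAdj (St : Finset (ℤ × ℤ)) (w : ℤ × ℤ → ℂ) (a b : K × K) : Prop :=
  a.1 = b.1 ∧ stepEval St w a.1 a.2 = stepEval St w b.1 b.2

/-- `y`-adjacency : equal second coordinates and equal values of `S`. -/
def YAdj (St : Finset (ℤ × ℤ)) (w : ℤ × ℤ → ℂ) (a b : K × K) : Prop :=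
  a.2 = b.2 ∧ stepEval St w a.1 a.2 = stepEval St w b.1 b.2

/-- Adjacency. -/
def Adj (St : Finset (ℤ × ℤ)) (w : ℤ × ℤ → ℂ) (a b : K × K) : Prop :=
  XAdj St w a b ∨ YAdj St w a b

/-- The orbit of the walk: the equivalence class of `(x,y)` under the
reflexive-transitive closure of adjacency. -/
def orbit (St : Finset (ℤ × ℤ)) (w : ℤ × ℤ → ℂ) (x y : K) : Set (K × K) :=
  {a | Relation.ReflTransGen (Adj St w) (x, y) a}

/-- `k = ℂ(S(x,y))`. -/
def kF (St : Finset (ℤ × ℤ)) (w : ℤ × ℤ → ℂ) (x y : K) : IntermediateField ℂ K :=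
  adjoin ℂ {stepEval St w x y}

/-- `k(x) = ℂ(x, S(x,y))`. -/
def kxF (St : Finset (ℤ × ℤ)) (w : ℤ × ℤ → ℂ) (x y : K) : IntermediateField ℂ K :=
  adjoin ℂ {x, stepEval St w x y}

/-- `k(y) = ℂ(y, S(x,y))`. -/
def kyF (St : Finset (ℤ × ℤ)) (w : ℤ × ℤ → ℂ) (x y : K) : IntermediateField ℂ K :=
  adjoin ℂ {y, stepEval St w x y}

/-- `k(x,y) = ℂ(x,y)`. -/
def kxyF (x y : K) : IntermediateField ℂ K := adjoin ℂ {x, y}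

/-- `k(𝒪)`: the subfield generated over `k` by all coordinates of the orbit. -/
def orbitF (St : Finset (ℤ × ℤ)) (w : ℤ × ℤ → ℂ) (x y : K) : IntermediateField ℂ K :=
  adjoin ℂ ({stepEval St w x y} ∪ {z | ∃ a ∈ orbit St w x y, z = a.1 ∨ z = a.2})

/-- The standing hypotheses: nonzero weights, a non-univariate step polynomial,
`x, y` algebraically independent over `ℂ`, and `𝕂` an algebraic closure of `ℂ(x,y)`. -/
structure Setting (St : Finset (ℤ × ℤ)) (w : ℤ × ℤ → ℂ) (x y : K) : Prop where
  weight_ne : ∀ p ∈ St, w p ≠ 0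
  notUniv : NotUnivariate St
  indep : AlgebraicIndependent ℂ ![x, y]
  algClosed : IsAlgClosed K
  algebraic : Algebra.IsAlgebraic (kxyF x y) K

lemma self_mem_orbit (St : Finset (ℤ × ℤ)) (w : ℤ × ℤ → ℂ) (x y : K) :
    (x, y) ∈ orbit St w x y := Relation.ReflTransGen.refl

lemma x_mem_orbitF (St : Finset (ℤ × ℤ)) (w : ℤ × ℤ → ℂ) (x y : K) :
    x ∈ orbitF St w x y := by
  apply subset_adjoin
  exact Set.mem_union_right _ ⟨(x, y), self_mem_orbit St w x y, Or.inl rfl⟩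

lemma y_mem_orbitF (St : Finset (ℤ × ℤ)) (w : ℤ × ℤ → ℂ) (x y : K) :
    y ∈ orbitF St w x y := by
  apply subset_adjoin
  exact Set.mem_union_right _ ⟨(x, y), self_mem_orbit St w x y, Or.inr rfl⟩

lemma S_mem_orbitF (St : Finset (ℤ × ℤ)) (w : ℤ × ℤ → ℂ) (x y : K) :
    stepEval St w x y ∈ orbitF St w x y := by
  apply subset_adjoin
  exact Set.mem_union_left _ rfl

lemma x_mem_kxF (St : Finset (ℤ × ℤ)) (w : ℤ × ℤ → ℂ) (x y : K) :
    x ∈ kxF St w x y :=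
  subset_adjoin ℂ _ (Set.mem_insert _ _)

lemma S_mem_kxF (St : Finset (ℤ × ℤ)) (w : ℤ × ℤ → ℂ) (x y : K) :
    stepEval St w x y ∈ kxF St w x y :=
  subset_adjoin ℂ _ (Set.mem_insert_of_mem _ rfl)

lemma y_mem_kyF (St : Finset (ℤ × ℤ)) (w : ℤ × ℤ → ℂ) (x y : K) :
    y ∈ kyF St w x y :=
  subset_adjoin ℂ _ (Set.mem_insert _ _)

lemma S_mem_kyF (St : Finset (ℤ × ℤ)) (w : ℤ × ℤ → ℂ) (x y : K) :
    stepEval St w x y ∈ kyF St w x y :=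
  subset_adjoin ℂ _ (Set.mem_insert_of_mem _ rfl)

/-- The subgroup of `ℂ`-automorphisms of `M` fixing the subfield `E` pointwise. -/
def fixingAuts (E M : IntermediateField ℂ K) : Subgroup (↥M ≃ₐ[ℂ] ↥M) where
  carrier := {σ | ∀ (z : K) (_ : z ∈ E) (hzM : z ∈ M), σ ⟨z, hzM⟩ = ⟨z, hzM⟩}
  one_mem' := fun _ _ _ => rfl
  mul_mem' := by
    intro σ τ hσ hτ z hzE hzM
    show σ (τ ⟨z, hzM⟩) = ⟨z, hzM⟩
    rw [hτ z hzE hzM, hσ z hzE hzM]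
  inv_mem' := by
    intro σ hσ z hzE hzM
    show σ.symm ⟨z, hzM⟩ = ⟨z, hzM⟩
    conv_lhs => rw [← hσ z hzE hzM]
    exact σ.symm_apply_apply _

/-- The Galois group `G_x = Gal(k(𝒪)|k(x))`. -/
def Gx (St : Finset (ℤ × ℤ)) (w : ℤ × ℤ → ℂ) (x y : K) :
    Subgroup (↥(orbitF St w x y) ≃ₐ[ℂ] ↥(orbitF St w x y)) :=
  fixingAuts (kxF St w x y) (orbitF St w x y)

/-- The Galois group `G_y = Gal(k(𝒪)|k(y))`. -/
def Gy (St : Finset (ℤ × ℤ)) (w : ℤ × ℤ → ℂ) (x y : K) :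
    Subgroup (↥(orbitF St w x y) ≃ₐ[ℂ] ↥(orbitF St w x y)) :=
  fixingAuts (kyF St w x y) (orbitF St w x y)

/-- The Galois group `G_{xy} = Gal(k(𝒪)|k(x,y))`. -/
def Gxy (St : Finset (ℤ × ℤ)) (w : ℤ × ℤ → ℂ) (x y : K) :
    Subgroup (↥(orbitF St w x y) ≃ₐ[ℂ] ↥(orbitF St w x y)) :=
  fixingAuts (kxyF x y) (orbitF St w x y)

/-- Extend an automorphism of an intermediate field to a map on all of `K`
(by the identity outside). -/
def extendAut {M : IntermediateField ℂ K} (σ : ↥M ≃ₐ[ℂ] ↥M) (z : K) : K :=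
  if h : z ∈ M then (σ ⟨z, h⟩ : K) else z

/-- The coordinate-wise action of an automorphism on a `0`-chain. -/
def actChain {M : IntermediateField ℂ K} (σ : ↥M ≃ₐ[ℂ] ↥M)
    (γ : (K × K) →₀ ℂ) : (K × K) →₀ ℂ :=
  Finsupp.mapDomain (Prod.map (extendAut σ) (extendAut σ)) γ

/-- Evaluation of a polynomial `P(X,Y,t)` at `(u, v, 1/S(x,y))` for `(u,v) = a`. -/
def evalPt (St : Finset (ℤ × ℤ)) (w : ℤ × ℤ → ℂ) (x y : K)
    (P : MvPolynomial (Fin 3) ℂ) (a : K × K) : K :=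
  MvPolynomial.aeval ![a.1, a.2, (stepEval St w x y)⁻¹] P

/-- Evaluation of a polynomial `P(X,Y,t)` at `(x, y, 1/S(x,y))`. -/
def evalXY (St : Finset (ℤ × ℤ)) (w : ℤ × ℤ → ℂ) (x y : K)
    (P : MvPolynomial (Fin 3) ℂ) : K :=
  evalPt St w x y P (x, y)

/-- Evaluation of the fraction `A/B` at `(a.1, a.2, 1/S(x,y))`. -/
def fracEval (St : Finset (ℤ × ℤ)) (w : ℤ × ℤ → ℂ) (x y : K)
    (A B : MvPolynomial (Fin 3) ℂ) (a : K × K) : K :=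
  evalPt St w x y A a / evalPt St w x y B a

/-- Evaluation (orbit sum) of the fraction `A/B` on a `0`-chain. -/
def chainEval (St : Finset (ℤ × ℤ)) (w : ℤ × ℤ → ℂ) (x y : K)
    (A B : MvPolynomial (Fin 3) ℂ) (γ : (K × K) →₀ ℂ) : K :=
  γ.sum fun a c => algebraMap ℂ K c * fracEval St w x y A B a

/-- A `0`-chain cancels decoupled fractions: the orbit sum of every regular fraction
of the form `F(X,t) + G(Y,t)` on it vanishes. -/
def CancelsDecoupled (St : Finset (ℤ × ℤ)) (w : ℤ × ℤ → ℂ) (mx my : ℕ)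
    (x y : K) (α : (K × K) →₀ ℂ) : Prop :=
  ∀ A₁ B₁ A₂ B₂ : MvPolynomial (Fin 3) ℂ,
    A₁ ∈ MvPolynomial.supported ℂ ({0, 2} : Set (Fin 3)) →
    B₁ ∈ MvPolynomial.supported ℂ ({0, 2} : Set (Fin 3)) →
    A₂ ∈ MvPolynomial.supported ℂ ({1, 2} : Set (Fin 3)) →
    B₂ ∈ MvPolynomial.supported ℂ ({1, 2} : Set (Fin 3)) →
    ¬ kernelPoly St w mx my ∣ B₁ → ¬ kernelPoly St w mx my ∣ B₂ →
    (α.sum fun a c =>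
      algebraMap ℂ K c * (fracEval St w x y A₁ B₁ a + fracEval St w x y A₂ B₂ a)) = 0

/-- The field of fractions `ℂ(X,Y,t)`. -/
abbrev FF : Type := FractionRing (MvPolynomial (Fin 3) ℂ)

/-- The inclusion of `ℂ[X,Y,t]` into `ℂ(X,Y,t)`. -/
def toFF (P : MvPolynomial (Fin 3) ℂ) : FF := algebraMap (MvPolynomial (Fin 3) ℂ) FF P

/-- The regular fraction `A/B` admits a Galois decoupling:
`A/B = F + G + K̃·R` with `F ∈ ℂ(X,t)`, `G ∈ ℂ(Y,t)` and `R` regular. -/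
def AdmitsDecoupling (St : Finset (ℤ × ℤ)) (w : ℤ × ℤ → ℂ) (mx my : ℕ)
    (A B : MvPolynomial (Fin 3) ℂ) : Prop :=
  ∃ F₁ F₂ G₁ G₂ R₁ R₂ : MvPolynomial (Fin 3) ℂ,
    F₁ ∈ MvPolynomial.supported ℂ ({0, 2} : Set (Fin 3)) ∧
    F₂ ∈ MvPolynomial.supported ℂ ({0, 2} : Set (Fin 3)) ∧
    G₁ ∈ MvPolynomial.supported ℂ ({1, 2} : Set (Fin 3)) ∧
    G₂ ∈ MvPolynomial.supported ℂ ({1, 2} : Set (Fin 3)) ∧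
    ¬ kernelPoly St w mx my ∣ F₂ ∧ ¬ kernelPoly St w mx my ∣ G₂ ∧
    ¬ kernelPoly St w mx my ∣ R₂ ∧
    toFF A / toFF B =
      toFF F₁ / toFF F₂ + toFF G₁ / toFF G₂ +
        toFF (kernelPoly St w mx my) * (toFF R₁ / toFF R₂)

/-- `(I, J) = (A/B, Cc/D)` is a pair of Galois invariants: `I - J = K̃·R` with `R` regular. -/
def IsInvariantPair (St : Finset (ℤ × ℤ)) (w : ℤ × ℤ → ℂ) (mx my : ℕ)
    (A B Cc D : MvPolynomial (Fin 3) ℂ) : Prop :=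
  ∃ R₁ R₂ : MvPolynomial (Fin 3) ℂ, ¬ kernelPoly St w mx my ∣ R₂ ∧
    toFF A / toFF B - toFF Cc / toFF D =
      toFF (kernelPoly St w mx my) * (toFF R₁ / toFF R₂)

/-- A constant pair of Galois invariants: both members are equivalent to a
common fraction `c ∈ ℂ(t)` modulo `K̃`. -/
def IsConstantPair (St : Finset (ℤ × ℤ)) (w : ℤ × ℤ → ℂ) (mx my : ℕ)
    (A B Cc D : MvPolynomial (Fin 3) ℂ) : Prop :=
  IsInvariantPair St w mx my A B Cc D ∧
  ∃ c₁ c₂ : MvPolynomial (Fin 3) ℂ,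
    c₁ ∈ MvPolynomial.supported ℂ ({2} : Set (Fin 3)) ∧
    c₂ ∈ MvPolynomial.supported ℂ ({2} : Set (Fin 3)) ∧ c₂ ≠ 0 ∧
    IsInvariantPair St w mx my A B c₁ c₂ ∧ IsInvariantPair St w mx my Cc D c₁ c₂

/-- `(γx, γy)` is a pseudo-decoupling of `(x,y)`. -/
def PseudoDecoupling (St : Finset (ℤ × ℤ)) (w : ℤ × ℤ → ℂ) (mx my : ℕ)
    (x y : K) (γx γy : (K × K) →₀ ℂ) : Prop :=
  ∀ A B : MvPolynomial (Fin 3) ℂ, ¬ kernelPoly St w mx my ∣ B →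
    AdmitsDecoupling St w mx my A B →
      fracEval St w x y A B (x, y) =
          chainEval St w x y A B γx + chainEval St w x y A B γy ∧
        chainEval St w x y A B γx ∈ kxF St w x y ∧
        chainEval St w x y A B γy ∈ kyF St w x y

/-- `(gx, gy, a)` is a decoupling of `(x,y)` in the orbit. -/
def IsDecoupling (St : Finset (ℤ × ℤ)) (w : ℤ × ℤ → ℂ) (mx my : ℕ)
    (x y : K) (gx gy a : (K × K) →₀ ℂ) : Prop :=
  Finsupp.single (x, y) (1 : ℂ) = gx + gy + a ∧
  (∀ σ ∈ Gx St w x y, actChain σ gx = gx) ∧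
  (∀ σ ∈ Gy St w x y, actChain σ gy = gy) ∧
  CancelsDecoupled St w mx my x y a

/-- The `x`-part of the boundary of a `1`-chain. -/
def boundaryX (St : Finset (ℤ × ℤ)) (w : ℤ × ℤ → ℂ)
    (c : ((K × K) × (K × K)) →₀ ℂ) : (K × K) →₀ ℂ :=
  c.sum fun e coeff =>
    if XAdj St w e.1 e.2 then
      coeff • (Finsupp.single e.2 (1 : ℂ) - Finsupp.single e.1 (1 : ℂ)) else 0

/-- The `y`-part of the boundary of a `1`-chain. -/
def boundaryY (St : Finset (ℤ × ℤ)) (w : ℤ × ℤ → ℂ)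
    (c : ((K × K) × (K × K)) →₀ ℂ) : (K × K) →₀ ℂ :=
  c.sum fun e coeff =>
    if YAdj St w e.1 e.2 then
      coeff • (Finsupp.single e.2 (1 : ℂ) - Finsupp.single e.1 (1 : ℂ)) else 0

/-- The `0`-chain induced by a bicolored loop. -/
def IsBicoloredChain (St : Finset (ℤ × ℤ)) (w : ℤ × ℤ → ℂ) (x y : K)
    (α : (K × K) →₀ ℂ) : Prop :=
  ∃ (n : ℕ) (b : ℕ → K × K), 0 < n ∧ b (2 * n) = b 0 ∧
    (∀ j < 2 * n, b j ∈ orbit St w x y) ∧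
    (∀ i < n, XAdj St w (b (2 * i)) (b (2 * i + 1)) ∧
      YAdj St w (b (2 * i + 1)) (b (2 * i + 2))) ∧
    α = ∑ j ∈ Finset.range (2 * n), ((-1 : ℂ) ^ (j + 1)) • Finsupp.single (b j) (1 : ℂ)

/-- The `0`-chain `ω = (1/|𝒪|) ∑_{a ∈ 𝒪} a`. -/
def omegaChain (St : Finset (ℤ × ℤ)) (w : ℤ × ℤ → ℂ) (x y : K)
    (h : (orbit St w x y).Finite) : (K × K) →₀ ℂ :=
  ((h.toFinset.card : ℂ))⁻¹ • ∑ a ∈ h.toFinset, Finsupp.single a (1 : ℂ)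

/-- The average `[G]·γ = (1/|G|) ∑_{σ ∈ G} σ·γ` of a `0`-chain under a group. -/
def groupAverage {M : IntermediateField ℂ K} (G : Subgroup (↥M ≃ₐ[ℂ] ↥M))
    (γ : (K × K) →₀ ℂ) : (K × K) →₀ ℂ :=
  ((Nat.card G : ℂ))⁻¹ • ∑ᶠ σ ∈ (G : Set (↥M ≃ₐ[ℂ] ↥M)), actChain σ γ

/-- `ℂ[X,t]` (two variables: `0` and `1`). -/
abbrev MvP2 : Type := MvPolynomial (Fin 2) ℂ

/-- `ℂ(X,t)`, the fraction field of `ℂ[X,t]`. -/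
abbrev CXt : Type := FractionRing MvP2

/-- Constants `ℂ → ℂ(X,t)`. -/
def cconst : ℂ →+* CXt := (algebraMap MvP2 CXt).comp (MvPolynomial.C)

/-- The first generator of `ℂ(X,t)`. -/
def gen0 : CXt := algebraMap MvP2 CXt (MvPolynomial.X 0)

/-- The second generator of `ℂ(X,t)`. -/
def gen1 : CXt := algebraMap MvP2 CXt (MvPolynomial.X 1)

/-- The kernel polynomial viewed as a polynomial in `Y` over `ℂ(X,t)`. -/
def kernelInY (St : Finset (ℤ × ℤ)) (w : ℤ × ℤ → ℂ) (mx my : ℕ) :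
    Polynomial CXt :=
  MvPolynomial.eval₂ ((Polynomial.C : CXt →+* Polynomial CXt).comp cconst)
    ![Polynomial.C gen0, Polynomial.X, Polynomial.C gen1]
    (kernelPoly St w mx my)

/-- The kernel polynomial viewed as a polynomial in `X` over `ℂ(Y,t)`. -/
def kernelInX (St : Finset (ℤ × ℤ)) (w : ℤ × ℤ → ℂ) (mx my : ℕ) :
    Polynomial CXt :=
  MvPolynomial.eval₂ ((Polynomial.C : CXt →+* Polynomial CXt).comp cconst)
    ![Polynomial.X, Polynomial.C gen0, Polynomial.C gen1]
    (kernelPoly St w mx my)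

/-- The kernel polynomial viewed as a polynomial in `X, Y` over `ℂ(t)`. -/
def kernelInXY (St : Finset (ℤ × ℤ)) (w : ℤ × ℤ → ℂ) (mx my : ℕ) :
    MvPolynomial (Fin 2) (RatFunc ℂ) :=
  MvPolynomial.eval₂
    ((MvPolynomial.C : RatFunc ℂ →+* MvPolynomial (Fin 2) (RatFunc ℂ)).comp
      (RatFunc.C : ℂ →+* RatFunc ℂ))
    ![MvPolynomial.X 0, MvPolynomial.X 1, MvPolynomial.C RatFunc.X]
    (kernelPoly St w mx my)

/-- The specialization `K̃(x, Y, 1/S(x,y))` as a polynomial in `Y` over `k(x)`. -/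
def kernelAtX (St : Finset (ℤ × ℤ)) (w : ℤ × ℤ → ℂ) (mx my : ℕ) (x y : K) :
    Polynomial ↥(kxF St w x y) :=
  MvPolynomial.aeval
    ![Polynomial.C (⟨x, x_mem_kxF St w x y⟩ : kxF St w x y), Polynomial.X,
      Polynomial.C (⟨(stepEval St w x y)⁻¹, inv_mem (S_mem_kxF St w x y)⟩ : kxF St w x y)]
    (kernelPoly St w mx my)

/-- The specialization `K̃(X, y, 1/S(x,y))` as a polynomial in `X` over `k(y)`. -/
def kernelAtY (St : Finset (ℤ × ℤ)) (w : ℤ × ℤ → ℂ) (mx my : ℕ) (x y : K) :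
    Polynomial ↥(kyF St w x y) :=
  MvPolynomial.aeval
    ![Polynomial.X, Polynomial.C (⟨y, y_mem_kyF St w x y⟩ : kyF St w x y),
      Polynomial.C (⟨(stepEval St w x y)⁻¹, inv_mem (S_mem_kyF St w x y)⟩ : kyF St w x y)]
    (kernelPoly St w mx my)

/-- Values of regular fractions with numerator and denominator supported on a set
of variables. -/
def regRange (St : Finset (ℤ × ℤ)) (w : ℤ × ℤ → ℂ) (x y : K) (mx my : ℕ)
    (s : Set (Fin 3)) : Set K :=
  {z | ∃ A B : MvPolynomial (Fin 3) ℂ,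
    A ∈ MvPolynomial.supported ℂ s ∧ B ∈ MvPolynomial.supported ℂ s ∧
    ¬ kernelPoly St w mx my ∣ B ∧ z = evalXY St w x y A / evalXY St w x y B}

end QuadrantWalk
namespace QuadrantWalk

/-! ### Auxiliary machinery for `stmt19` -/

section AuxChains

variable {K : Type} [Field K] [Algebra ℂ K]

/-- Linear evaluation of a `0`-chain along a function. -/
def Wop (F : K × K → K) : ((K × K) →₀ ℂ) →ₗ[ℂ] K :=
  Finsupp.linearCombination ℂ F

lemma Wop_single (F : K × K → K) (p : K × K) (c : ℂ) :
    Wop F (Finsupp.single p c) = c • F p :=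
  Finsupp.linearCombination_single ℂ c p

lemma Wop_mapDomain (F : K × K → K) (φ : K × K → K × K) (γ : (K × K) →₀ ℂ) :
    Wop F (Finsupp.mapDomain φ γ) = Wop (F ∘ φ) γ :=
  Finsupp.linearCombination_mapDomain ℂ φ γ

variable {M : IntermediateField ℂ K}

lemma extendAut_of_mem (σ : ↥M ≃ₐ[ℂ] ↥M) {z : K} (h : z ∈ M) :
    extendAut σ z = ↑(σ ⟨z, h⟩) := dif_pos h

lemma extendAut_of_not_mem (σ : ↥M ≃ₐ[ℂ] ↥M) {z : K} (h : z ∉ M) :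
    extendAut σ z = z := dif_neg h

lemma extendAut_mem (σ : ↥M ≃ₐ[ℂ] ↥M) {z : K} (h : z ∈ M) :
    extendAut σ z ∈ M := by rw [extendAut_of_mem σ h]; exact (σ ⟨z, h⟩).2

lemma extendAut_one (z : K) : extendAut (1 : ↥M ≃ₐ[ℂ] ↥M) z = z := by
  by_cases h : z ∈ M
  · rw [extendAut_of_mem _ h]; rfl
  · exact extendAut_of_not_mem _ h

lemma extendAut_comp (σ τ : ↥M ≃ₐ[ℂ] ↥M) (z : K) :
    extendAut σ (extendAut τ z) = extendAut (σ * τ) z := by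
  by_cases h : z ∈ M
  · rw [extendAut_of_mem τ h, extendAut_of_mem σ (τ ⟨z, h⟩).2,
      extendAut_of_mem (σ * τ) h, Subtype.coe_eta, AlgEquiv.mul_apply]
  · rw [extendAut_of_not_mem τ h, extendAut_of_not_mem σ h,
      extendAut_of_not_mem (σ * τ) h]

lemma extendAut_leftInv (σ : ↥M ≃ₐ[ℂ] ↥M) (z : K) :
    extendAut σ⁻¹ (extendAut σ z) = z := by
  rw [extendAut_comp, inv_mul_cancel, extendAut_one]

lemma extendAut_injective (σ : ↥M ≃ₐ[ℂ] ↥M) : Function.Injective (extendAut σ) :=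
  Function.LeftInverse.injective (g := extendAut σ⁻¹) (extendAut_leftInv σ)

lemma pmap_injective (σ : ↥M ≃ₐ[ℂ] ↥M) :
    Function.Injective (Prod.map (extendAut σ) (extendAut σ) : K × K → K × K) :=
  (extendAut_injective σ).prodMap (extendAut_injective σ)

lemma extendAut_algebraMap (σ : ↥M ≃ₐ[ℂ] ↥M) (c : ℂ) :
    extendAut σ (algebraMap ℂ K c) = algebraMap ℂ K c := by
  have h : algebraMap ℂ K c ∈ M := M.algebraMap_mem c
  rw [extendAut_of_mem σ h]
  have h2 : (⟨algebraMap ℂ K c, h⟩ : M) = algebraMap ℂ ↥M c := rfl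
  rw [h2, AlgEquiv.commutes]
  rfl

lemma stepEval_hom {K₁ K₂ : Type} [Field K₁] [Field K₂] [Algebra ℂ K₁] [Algebra ℂ K₂]
    (St : Finset (ℤ × ℤ)) (w : ℤ × ℤ → ℂ) (f : K₁ →+* K₂)
    (hf : ∀ c : ℂ, f (algebraMap ℂ K₁ c) = algebraMap ℂ K₂ c) (u v : K₁) :
    f (stepEval St w u v) = stepEval St w (f u) (f v) := by
  unfold stepEval
  rw [map_sum]
  refine Finset.sum_congr rfl fun p _ => ?_
  rw [map_mul, map_mul, hf, map_zpow₀, map_zpow₀]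

lemma stepEval_mem (St : Finset (ℤ × ℤ)) (w : ℤ × ℤ → ℂ) {u v : K}
    (hu : u ∈ M) (hv : v ∈ M) : stepEval St w u v ∈ M :=
  IntermediateField.sum_mem M fun p _ => mul_mem (mul_mem (M.algebraMap_mem _)
    (IntermediateField.pow_mem M hu p.1)) (IntermediateField.pow_mem M hv p.2)

lemma stepEval_coe (St : Finset (ℤ × ℤ)) (w : ℤ × ℤ → ℂ) (a b : ↥M) :
    ((stepEval St w a b : ↥M) : K) = stepEval St w (a : K) (b : K) :=
  stepEval_hom St w (algebraMap ↥M K)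
    (fun c => (IsScalarTower.algebraMap_apply ℂ ↥M K c).symm) a b

lemma extendAut_stepEval (St : Finset (ℤ × ℤ)) (w : ℤ × ℤ → ℂ)
    (σ : ↥M ≃ₐ[ℂ] ↥M) {u v : K} (hu : u ∈ M) (hv : v ∈ M) :
    extendAut σ (stepEval St w u v) = stepEval St w (extendAut σ u) (extendAut σ v) := by
  have hm : stepEval St w u v ∈ M := stepEval_mem St w hu hv
  rw [extendAut_of_mem σ hm, extendAut_of_mem σ hu, extendAut_of_mem σ hv]
  have h1 : (⟨stepEval St w u v, hm⟩ : M) = stepEval St w ⟨u, hu⟩ ⟨v, hv⟩ :=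
    Subtype.ext (stepEval_coe St w ⟨u, hu⟩ ⟨v, hv⟩).symm
  rw [h1]
  have h2 : σ (stepEval St w ⟨u, hu⟩ ⟨v, hv⟩)
      = stepEval St w (σ ⟨u, hu⟩) (σ ⟨v, hv⟩) :=
    stepEval_hom St w (σ : ↥M →+* ↥M) (fun c => σ.commutes c) ⟨u, hu⟩ ⟨v, hv⟩
  rw [h2, stepEval_coe]

/-- list of consecutive steps -/
def stepsL {α : Type*} : List α → List (α × α)
  | a :: b :: t => (a, b) :: stepsL (b :: t)
  | _ => []

lemma stepsL_mem {α : Type*} : ∀ {l : List α} {s : α × α},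
    s ∈ stepsL l → s.1 ∈ l ∧ s.2 ∈ l := by
  intro l
  induction l with
  | nil => intro s hs; simp [stepsL] at hs
  | cons a t ih =>
    cases t with
    | nil => intro s hs; simp [stepsL] at hs
    | cons b u =>
      intro s hs
      rw [stepsL] at hs
      rcases List.mem_cons.mp hs with h | h
      · subst h
        exact ⟨List.mem_cons_self, List.mem_cons_of_mem _ (List.mem_cons_self)⟩
      · have h2 := ih h
        exact ⟨List.mem_cons_of_mem _ h2.1, List.mem_cons_of_mem _ h2.2⟩

lemma stepsL_chain {α : Type*} {r : α → α → Prop} : ∀ {a : α} {l : List α},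
    List.Chain r a l → ∀ s ∈ stepsL (a :: l), r s.1 s.2 := by
  intro a l
  induction l generalizing a with
  | nil => intro _ s hs; simp [stepsL] at hs
  | cons b t ih =>
    intro h s hs
    unfold List.Chain at h
    rw [List.chain_cons] at h
    rw [stepsL] at hs
    rcases List.mem_cons.mp hs with rfl | hs'
    · exact h.1
    · exact ih h.2 s hs'

lemma stepsL_tele {α : Type*} (G : α → K) : ∀ (t : List α) (a z : α),
    ((stepsL (a :: t)).map (fun s => G s.1 - G s.2)).sum
      = G a - G ((a :: t).getLastD z) := by
  intro t
  induction t with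
  | nil => intro a z; simp [stepsL]
  | cons b u ih =>
    intro a z
    rw [stepsL, List.map_cons, List.sum_cons, ih b z]
    rw [List.getLastD_cons (a := z) (b := a) (l := b :: u), List.getLastD_cons (a := z) (b := b) (l := u),
      List.getLastD_cons (a := a) (b := b) (l := u)]
    ring

end AuxChains

section AuxOrbit

variable {K : Type} [Field K] [Algebra ℂ K]
variable (St : Finset (ℤ × ℤ)) (w : ℤ × ℤ → ℂ) (x y : K)

lemma mem_orbitF_fst {a : K × K} (h : a ∈ orbit St w x y) :
    a.1 ∈ orbitF St w x y :=
  subset_adjoin _ _ (Set.mem_union_right _ ⟨a, h, Or.inl rfl⟩)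

lemma mem_orbitF_snd {a : K × K} (h : a ∈ orbit St w x y) :
    a.2 ∈ orbitF St w x y :=
  subset_adjoin _ _ (Set.mem_union_right _ ⟨a, h, Or.inr rfl⟩)

lemma orbit_tail {a b : K × K} (ha : a ∈ orbit St w x y) (hab : Adj St w a b) :
    b ∈ orbit St w x y :=
  Relation.ReflTransGen.tail ha hab

lemma orbit_map_orbit (σ : ↥(orbitF St w x y) ≃ₐ[ℂ] ↥(orbitF St w x y))
    (h0 : (extendAut σ x, extendAut σ y) ∈ orbit St w x y) :
    ∀ a ∈ orbit St w x y,
      (extendAut σ a.1, extendAut σ a.2) ∈ orbit St w x y := by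
  intro a ha
  induction ha with
  | refl => exact h0
  | @tail b c hab hbc ih =>
    have hb : b ∈ orbit St w x y := hab
    have hc : c ∈ orbit St w x y := orbit_tail St w x y hb hbc
    refine orbit_tail St w x y ih ?_
    have e1 : extendAut σ (stepEval St w b.1 b.2)
        = stepEval St w (extendAut σ b.1) (extendAut σ b.2) :=
      extendAut_stepEval St w σ (mem_orbitF_fst St w x y hb) (mem_orbitF_snd St w x y hb)
    have e2 : extendAut σ (stepEval St w c.1 c.2)
        = stepEval St w (extendAut σ c.1) (extendAut σ c.2) :=
      extendAut_stepEval St w σ (mem_orbitF_fst St w x y hc) (mem_orbitF_snd St w x y hc)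
    cases hbc with
    | inl h' =>
      exact Or.inl ⟨congrArg (extendAut σ) h'.1, by rw [← e1, ← e2, h'.2]⟩
    | inr h' =>
      exact Or.inr ⟨congrArg (extendAut σ) h'.1, by rw [← e1, ← e2, h'.2]⟩

lemma Gx_fix_x {σ} (hσ : σ ∈ Gx St w x y) : extendAut σ x = x := by
  rw [extendAut_of_mem σ (x_mem_orbitF St w x y),
    hσ x (x_mem_kxF St w x y) (x_mem_orbitF St w x y)]

lemma Gx_fix_S {σ} (hσ : σ ∈ Gx St w x y) :
    extendAut σ (stepEval St w x y) = stepEval St w x y := by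
  rw [extendAut_of_mem σ (S_mem_orbitF St w x y),
    hσ _ (S_mem_kxF St w x y) (S_mem_orbitF St w x y)]

lemma Gy_fix_y {σ} (hσ : σ ∈ Gy St w x y) : extendAut σ y = y := by
  rw [extendAut_of_mem σ (y_mem_orbitF St w x y),
    hσ y (y_mem_kyF St w x y) (y_mem_orbitF St w x y)]

lemma Gy_fix_S {σ} (hσ : σ ∈ Gy St w x y) :
    extendAut σ (stepEval St w x y) = stepEval St w x y := by
  rw [extendAut_of_mem σ (S_mem_orbitF St w x y),
    hσ _ (S_mem_kyF St w x y) (S_mem_orbitF St w x y)]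

lemma Gx_maps_orbit {σ} (hσ : σ ∈ Gx St w x y) :
    ∀ a ∈ orbit St w x y,
      (extendAut σ a.1, extendAut σ a.2) ∈ orbit St w x y := by
  apply orbit_map_orbit
  have h1 := extendAut_stepEval St w σ (x_mem_orbitF St w x y) (y_mem_orbitF St w x y)
  rw [Gx_fix_S St w x y hσ] at h1
  rw [Gx_fix_x St w x y hσ] at h1 ⊢
  exact orbit_tail St w x y (self_mem_orbit St w x y) (Or.inl ⟨rfl, h1⟩)

lemma Gy_maps_orbit {σ} (hσ : σ ∈ Gy St w x y) :
    ∀ a ∈ orbit St w x y,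
      (extendAut σ a.1, extendAut σ a.2) ∈ orbit St w x y := by
  apply orbit_map_orbit
  have h1 := extendAut_stepEval St w σ (x_mem_orbitF St w x y) (y_mem_orbitF St w x y)
  rw [Gy_fix_S St w x y hσ] at h1
  rw [Gy_fix_y St w x y hσ] at h1 ⊢
  exact orbit_tail St w x y (self_mem_orbit St w x y) (Or.inr ⟨rfl, h1⟩)

lemma chain_mem_orbit : ∀ (l : List (K × K)) (a : K × K), a ∈ orbit St w x y →
    List.Chain (Adj St w) a l → ∀ p ∈ a :: l, p ∈ orbit St w x y := by
  intro l
  induction l with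
  | nil =>
    intro a ha _ p hp
    rw [List.mem_singleton] at hp
    subst hp; exact ha
  | cons b t ih =>
    intro a ha h p hp
    unfold List.Chain at h
    rw [List.chain_cons] at h
    have hb : b ∈ orbit St w x y := orbit_tail St w x y ha h.1
    rcases List.mem_cons.mp hp with rfl | hp'
    · exact ha
    · exact ih b hb h.2 p hp'

/-- actChain basic lemmas -/
lemma actChain_comp {M : IntermediateField ℂ K} (σ τ : ↥M ≃ₐ[ℂ] ↥M)
    (γ : (K × K) →₀ ℂ) : actChain σ (actChain τ γ) = actChain (σ * τ) γ := by
  unfold actChain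
  rw [← Finsupp.mapDomain_comp]
  congr 1
  funext p
  cases p with
  | mk a b => simp [Prod.map, extendAut_comp]

lemma actChain_one {M : IntermediateField ℂ K} (γ : (K × K) →₀ ℂ) :
    actChain (1 : ↥M ≃ₐ[ℂ] ↥M) γ = γ := by
  unfold actChain
  have h : (Prod.map (extendAut (1 : ↥M ≃ₐ[ℂ] ↥M)) (extendAut (1 : ↥M ≃ₐ[ℂ] ↥M)) : K × K → K × K) = id := by
    funext p
    cases p with
    | mk a b => simp [Prod.map, extendAut_one]
  rw [h, Finsupp.mapDomain_id]

lemma actChain_injective {M : IntermediateField ℂ K} (σ : ↥M ≃ₐ[ℂ] ↥M) :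
    Function.Injective (actChain σ : ((K × K) →₀ ℂ) → _) :=
  Finsupp.mapDomain_injective (pmap_injective σ)

lemma actChain_smul {M : IntermediateField ℂ K} (σ : ↥M ≃ₐ[ℂ] ↥M) (c : ℂ)
    (γ : (K × K) →₀ ℂ) : actChain σ (c • γ) = c • actChain σ γ :=
  Finsupp.mapDomain_smul c γ

lemma actChain_sum {M : IntermediateField ℂ K} (σ : ↥M ≃ₐ[ℂ] ↥M)
    {ι : Type*} (s : Finset ι) (f : ι → (K × K) →₀ ℂ) :
    actChain σ (∑ i ∈ s, f i) = ∑ i ∈ s, actChain σ (f i) :=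
  map_sum (Finsupp.mapDomain.addMonoidHom _) f s

lemma Wop_actChain {M : IntermediateField ℂ K} (F : K × K → K)
    (σ : ↥M ≃ₐ[ℂ] ↥M) (γ : (K × K) →₀ ℂ) :
    Wop F (actChain σ γ) = Wop (F ∘ Prod.map (extendAut σ) (extendAut σ)) γ :=
  Wop_mapDomain _ _ _

lemma support_actChain {M : IntermediateField ℂ K} (σ : ↥M ≃ₐ[ℂ] ↥M)
    (γ : (K × K) →₀ ℂ) :
    ↑(actChain σ γ).support ⊆
      (Prod.map (extendAut σ) (extendAut σ)) '' ↑γ.support := by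
  intro p hp
  have := Finsupp.mapDomain_support (f := Prod.map (extendAut σ) (extendAut σ)) (s := γ) hp
  rcases Finset.mem_image.mp this with ⟨a, ha, rfl⟩
  exact ⟨a, ha, rfl⟩

/-- finiteness of the set of images of a chain supported in the orbit -/
lemma actChain_range_finite (hfin : (orbit St w x y).Finite)
    (G : Subgroup (↥(orbitF St w x y) ≃ₐ[ℂ] ↥(orbitF St w x y)))
    (hG : ∀ σ ∈ G, ∀ a ∈ orbit St w x y,
      (extendAut σ a.1, extendAut σ a.2) ∈ orbit St w x y)
    (c : (K × K) →₀ ℂ) (hc : ↑c.support ⊆ orbit St w x y) :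
    (Set.range fun σ : G =>
      actChain (σ : ↥(orbitF St w x y) ≃ₐ[ℂ] ↥(orbitF St w x y)) c).Finite := by
  classical
  let F : (↥c.support → ↥hfin.toFinset) → ((K × K) →₀ ℂ) := fun ψ =>
    Finsupp.mapDomain (fun p => if h : p ∈ c.support then (ψ ⟨p, h⟩ : K × K) else p) c
  have hsub : (Set.range fun σ : G =>
      actChain (σ : ↥(orbitF St w x y) ≃ₐ[ℂ] ↥(orbitF St w x y)) c) ⊆ Set.range F := by
    rintro _ ⟨σ, rfl⟩
    refine ⟨fun p => ⟨Prod.map (extendAut (σ : ↥(orbitF St w x y) ≃ₐ[ℂ] ↥(orbitF St w x y)))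
      (extendAut (σ : ↥(orbitF St w x y) ≃ₐ[ℂ] ↥(orbitF St w x y))) ↑p, ?_⟩, ?_⟩
    · have hp : (↑p : K × K) ∈ orbit St w x y := hc p.2
      exact (Set.Finite.mem_toFinset hfin).mpr (hG σ σ.2 _ hp)
    · show Finsupp.mapDomain _ c = actChain _ c
      unfold actChain
      apply Finsupp.mapDomain_congr
      intro p hp
      rw [dif_pos hp]
  exact Set.Finite.subset (Set.finite_range F) hsub

end AuxOrbit

section AuxDE

variable {K : Type} [Field K] [Algebra ℂ K]
variable (St : Finset (ℤ × ℤ)) (w : ℤ × ℤ → ℂ)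

/-- D-chain of a path: endpoint plus `y`-steps differences. -/
def Dch (z : K × K) (l : List (K × K)) : (K × K) →₀ ℂ :=
  Finsupp.single (l.getLastD z) 1 +
    ((stepsL l).map fun s =>
      if YAdj St w s.1 s.2 then Finsupp.single s.1 (1 : ℂ) - Finsupp.single s.2 1
      else 0).sum

/-- E-chain of a path: `x`-steps differences. -/
def Ech (l : List (K × K)) : (K × K) →₀ ℂ :=
  ((stepsL l).map fun s =>
    if YAdj St w s.1 s.2 then 0
    else Finsupp.single s.1 (1 : ℂ) - Finsupp.single s.2 1).sum

lemma Wop_Dch_x (G : K × K → K) (z a : K × K) (t : List (K × K))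
    (hA : ∀ s ∈ stepsL (a :: t), Adj St w s.1 s.2)
    (hG : ∀ s ∈ stepsL (a :: t), XAdj St w s.1 s.2 → G s.1 = G s.2) :
    Wop G (Dch St w z (a :: t)) = G a := by
  unfold Dch
  rw [map_add, Wop_single, one_smul, map_list_sum, List.map_map]
  have h1 : ((stepsL (a :: t)).map ((Wop G) ∘ fun s =>
      if YAdj St w s.1 s.2 then Finsupp.single s.1 (1 : ℂ) - Finsupp.single s.2 1
      else 0)).sum = ((stepsL (a :: t)).map fun s => G s.1 - G s.2).sum := by
    congr 1
    apply List.map_congr_left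
    intro s hs
    simp only [Function.comp_apply]
    by_cases hy : YAdj St w s.1 s.2
    · rw [if_pos hy, map_sub, Wop_single, Wop_single, one_smul, one_smul]
    · rw [if_neg hy, map_zero, hG s hs ((hA s hs).resolve_right hy), sub_self]
  rw [h1, stepsL_tele G t a z]
  ring

lemma Wop_Dch_y (G : K × K → K) (z a : K × K) (t : List (K × K))
    (hG : ∀ s ∈ stepsL (a :: t), YAdj St w s.1 s.2 → G s.1 = G s.2) :
    Wop G (Dch St w z (a :: t)) = G ((a :: t).getLastD z) := by
  unfold Dch
  rw [map_add, Wop_single, one_smul, map_list_sum, List.map_map]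
  have h1 : ((stepsL (a :: t)).map ((Wop G) ∘ fun s =>
      if YAdj St w s.1 s.2 then Finsupp.single s.1 (1 : ℂ) - Finsupp.single s.2 1
      else 0)).sum = ((stepsL (a :: t)).map fun _ => (0 : K)).sum := by
    congr 1
    apply List.map_congr_left
    intro s hs
    simp only [Function.comp_apply]
    by_cases hy : YAdj St w s.1 s.2
    · rw [if_pos hy, map_sub, Wop_single, Wop_single, one_smul, one_smul,
        hG s hs hy, sub_self]
    · rw [if_neg hy, map_zero]
  rw [h1]
  simp

lemma Wop_Ech_x (G : K × K → K) (a : K × K) (t : List (K × K))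
    (hA : ∀ s ∈ stepsL (a :: t), Adj St w s.1 s.2)
    (hG : ∀ s ∈ stepsL (a :: t), XAdj St w s.1 s.2 → G s.1 = G s.2) :
    Wop G (Ech St w (a :: t)) = 0 := by
  unfold Ech
  rw [map_list_sum, List.map_map]
  have h1 : ((stepsL (a :: t)).map ((Wop G) ∘ fun s =>
      if YAdj St w s.1 s.2 then 0
      else Finsupp.single s.1 (1 : ℂ) - Finsupp.single s.2 1)).sum
      = ((stepsL (a :: t)).map fun _ => (0 : K)).sum := by
    congr 1
    apply List.map_congr_left
    intro s hs
    simp only [Function.comp_apply]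
    by_cases hy : YAdj St w s.1 s.2
    · rw [if_pos hy, map_zero]
    · rw [if_neg hy, map_sub, Wop_single, Wop_single, one_smul, one_smul,
        hG s hs ((hA s hs).resolve_right hy), sub_self]
  rw [h1]
  simp

lemma Wop_Ech_y (G : K × K → K) (z a : K × K) (t : List (K × K))
    (hG : ∀ s ∈ stepsL (a :: t), YAdj St w s.1 s.2 → G s.1 = G s.2) :
    Wop G (Ech St w (a :: t)) = G a - G ((a :: t).getLastD z) := by
  unfold Ech
  rw [map_list_sum, List.map_map]
  have h1 : ((stepsL (a :: t)).map ((Wop G) ∘ fun s =>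
      if YAdj St w s.1 s.2 then 0
      else Finsupp.single s.1 (1 : ℂ) - Finsupp.single s.2 1)).sum
      = ((stepsL (a :: t)).map fun s => G s.1 - G s.2).sum := by
    congr 1
    apply List.map_congr_left
    intro s hs
    simp only [Function.comp_apply]
    by_cases hy : YAdj St w s.1 s.2
    · rw [if_pos hy, map_zero, hG s hs hy, sub_self]
    · rw [if_neg hy, map_sub, Wop_single, Wop_single, one_smul, one_smul]
  rw [h1, stepsL_tele G t a z]

lemma support_listSum {l : List ((K × K) →₀ ℂ)} {s : Set (K × K)}
    (h : ∀ γ ∈ l, ↑γ.support ⊆ s) : ↑l.sum.support ⊆ s := by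
  induction l with
  | nil => simp
  | cons a t ih =>
    rw [List.sum_cons]
    intro p hp
    rcases Finset.mem_union.mp (Finsupp.support_add hp) with hp' | hp'
    · exact h a (List.mem_cons_self) hp'
    · exact ih (fun γ hγ => h γ (List.mem_cons_of_mem _ hγ)) hp'

lemma support_single_subset' {p : K × K} {c : ℂ} {s : Set (K × K)} (hp : p ∈ s) :
    ↑(Finsupp.single p c).support ⊆ s := by
  intro q hq
  rcases Finset.mem_singleton.mp (Finsupp.support_single_subset hq) with rfl
  exact hp

lemma support_Dch {z : K × K} {l : List (K × K)} {s : Set (K × K)}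
    (hlast : l.getLastD z ∈ s) (hl : ∀ p ∈ l, p ∈ s) :
    ↑(Dch St w z l).support ⊆ s := by
  unfold Dch
  intro p hp
  rcases Finset.mem_union.mp (Finsupp.support_add hp) with hp' | hp'
  · exact support_single_subset' hlast hp'
  · refine support_listSum ?_ hp'
    intro γ hγ
    rcases List.mem_map.mp hγ with ⟨st, hst, rfl⟩
    have h1 : st.1 ∈ s := hl _ (stepsL_mem hst).1
    have h2 : st.2 ∈ s := hl _ (stepsL_mem hst).2
    by_cases hy : YAdj St w st.1 st.2
    · rw [if_pos hy]
      intro q hq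
      rcases Finset.mem_union.mp (Finsupp.support_sub hq) with hq' | hq'
      · exact support_single_subset' h1 hq'
      · exact support_single_subset' h2 hq'
    · rw [if_neg hy]; simp

lemma support_Ech {l : List (K × K)} {s : Set (K × K)}
    (hl : ∀ p ∈ l, p ∈ s) :
    ↑(Ech St w l).support ⊆ s := by
  unfold Ech
  refine support_listSum ?_
  intro γ hγ
  rcases List.mem_map.mp hγ with ⟨st, hst, rfl⟩
  have h1 : st.1 ∈ s := hl _ (stepsL_mem hst).1
  have h2 : st.2 ∈ s := hl _ (stepsL_mem hst).2
  by_cases hy : YAdj St w st.1 st.2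
  · rw [if_pos hy]; simp
  · rw [if_neg hy]
    intro q hq
    rcases Finset.mem_union.mp (Finsupp.support_sub hq) with hq' | hq'
    · exact support_single_subset' h1 hq'
    · exact support_single_subset' h2 hq'

/-- rationality of chains -/
def RatC (γ : (K × K) →₀ ℂ) : Prop := ∀ p, ∃ r : ℚ, γ p = (r : ℂ)

lemma RatC_zero : RatC (0 : (K × K) →₀ ℂ) := fun _ => ⟨0, by simp⟩

lemma RatC_single (p : K × K) (r : ℚ) : RatC (Finsupp.single p (r : ℂ)) := by
  intro q
  rcases eq_or_ne p q with rfl | h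
  · exact ⟨r, by simp⟩
  · exact ⟨0, by simp [Finsupp.single_apply, h]⟩

lemma RatC_add {γ δ : (K × K) →₀ ℂ} (hγ : RatC γ) (hδ : RatC δ) : RatC (γ + δ) := by
  intro p
  obtain ⟨r, hr⟩ := hγ p
  obtain ⟨r', hr'⟩ := hδ p
  exact ⟨r + r', by simp [hr, hr']⟩

lemma RatC_sub {γ δ : (K × K) →₀ ℂ} (hγ : RatC γ) (hδ : RatC δ) : RatC (γ - δ) := by
  intro p
  obtain ⟨r, hr⟩ := hγ p
  obtain ⟨r', hr'⟩ := hδ p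
  exact ⟨r - r', by simp [hr, hr']⟩

lemma RatC_smul {γ : (K × K) →₀ ℂ} (r : ℚ) (hγ : RatC γ) : RatC ((r : ℂ) • γ) := by
  intro p
  obtain ⟨r', hr'⟩ := hγ p
  exact ⟨r * r', by simp [hr']⟩

lemma RatC_listSum {l : List ((K × K) →₀ ℂ)} (h : ∀ γ ∈ l, RatC γ) : RatC l.sum := by
  induction l with
  | nil => simpa using RatC_zero
  | cons a t ih =>
    rw [List.sum_cons]
    exact RatC_add (h a (List.mem_cons_self))
      (ih fun γ hγ => h γ (List.mem_cons_of_mem _ hγ))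

lemma RatC_finsetSum {ι : Type*} {s : Finset ι} {f : ι → (K × K) →₀ ℂ}
    (h : ∀ i ∈ s, RatC (f i)) : RatC (∑ i ∈ s, f i) := by
  classical
  induction s using Finset.induction with
  | empty => simpa using RatC_zero
  | insert _ _ hi ih =>
    rw [Finset.sum_insert hi]
    exact RatC_add (h _ (Finset.mem_insert_self _ _))
      (ih fun i his => h i (Finset.mem_insert_of_mem his))

lemma RatC_mapDomain {φ : K × K → K × K} (hφ : Function.Injective φ)
    {γ : (K × K) →₀ ℂ} (h : RatC γ) : RatC (Finsupp.mapDomain φ γ) := by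
  classical
  intro p
  by_cases hp : ∃ a, φ a = p
  · obtain ⟨a, rfl⟩ := hp
    rw [Finsupp.mapDomain_apply hφ]
    exact h a
  · refine ⟨0, ?_⟩
    rw [Finsupp.notMem_support_iff.mp, Rat.cast_zero]
    intro hmem
    rcases Finset.mem_image.mp (Finsupp.mapDomain_support hmem) with ⟨a, _, ha⟩
    exact hp ⟨a, ha⟩

lemma RatC_Dch (z : K × K) (l : List (K × K)) : RatC (Dch St w z l) := by
  unfold Dch
  refine RatC_add ?_ (RatC_listSum ?_)
  · simpa using RatC_single (l.getLastD z) 1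
  · intro γ hγ
    rcases List.mem_map.mp hγ with ⟨st, _, rfl⟩
    by_cases hy : YAdj St w st.1 st.2
    · rw [if_pos hy]
      refine RatC_sub ?_ ?_ <;> simpa using RatC_single _ 1
    · rw [if_neg hy]; exact RatC_zero

lemma RatC_Ech (l : List (K × K)) : RatC (Ech St w l) := by
  unfold Ech
  refine RatC_listSum ?_
  intro γ hγ
  rcases List.mem_map.mp hγ with ⟨st, _, rfl⟩
  by_cases hy : YAdj St w st.1 st.2
  · rw [if_pos hy]; exact RatC_zero
  · rw [if_neg hy]
    refine RatC_sub ?_ ?_ <;> simpa using RatC_single _ 1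

end AuxDE

section AuxEval

variable {K : Type} [Field K] [Algebra ℂ K]

lemma aeval_eq_on_supported {s : Set (Fin 3)} {P : MvPolynomial (Fin 3) ℂ}
    (hP : P ∈ MvPolynomial.supported ℂ s) (v₁ v₂ : Fin 3 → K)
    (h : ∀ i ∈ s, v₁ i = v₂ i) :
    MvPolynomial.aeval v₁ P = MvPolynomial.aeval v₂ P := by
  rw [MvPolynomial.supported_eq_adjoin_X] at hP
  induction hP using Algebra.adjoin_induction with
  | mem p hp =>
    obtain ⟨i, hi, rfl⟩ := hp
    simp [h i hi]
  | algebraMap r => simp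
  | add p q hp hq ihp ihq => simp [ihp, ihq]
  | mul p q hp hq ihp ihq => simp [ihp, ihq]

lemma fracEval_fst (St : Finset (ℤ × ℤ)) (w : ℤ × ℤ → ℂ) (x y : K)
    {A B : MvPolynomial (Fin 3) ℂ}
    (hA : A ∈ MvPolynomial.supported ℂ ({0, 2} : Set (Fin 3)))
    (hB : B ∈ MvPolynomial.supported ℂ ({0, 2} : Set (Fin 3))) (a : K × K) :
    fracEval St w x y A B a = fracEval St w x y A B (a.1, y) := by
  unfold fracEval evalPt
  have h : ∀ i ∈ ({0, 2} : Set (Fin 3)),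
      (![a.1, a.2, (stepEval St w x y)⁻¹] : Fin 3 → K) i
        = ![(a.1, y).1, (a.1, y).2, (stepEval St w x y)⁻¹] i := by
    rintro i (rfl | rfl) <;> rfl
  rw [aeval_eq_on_supported hA _ _ h, aeval_eq_on_supported hB _ _ h]

lemma fracEval_snd (St : Finset (ℤ × ℤ)) (w : ℤ × ℤ → ℂ) (x y : K)
    {A B : MvPolynomial (Fin 3) ℂ}
    (hA : A ∈ MvPolynomial.supported ℂ ({1, 2} : Set (Fin 3)))
    (hB : B ∈ MvPolynomial.supported ℂ ({1, 2} : Set (Fin 3))) (a : K × K) :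
    fracEval St w x y A B a = fracEval St w x y A B (x, a.2) := by
  unfold fracEval evalPt
  have h : ∀ i ∈ ({1, 2} : Set (Fin 3)),
      (![a.1, a.2, (stepEval St w x y)⁻¹] : Fin 3 → K) i
        = ![(x, a.2).1, (x, a.2).2, (stepEval St w x y)⁻¹] i := by
    rintro i (rfl | rfl) <;> rfl
  rw [aeval_eq_on_supported hA _ _ h, aeval_eq_on_supported hB _ _ h]

/-- sum over the set of second coordinates is invariant under an orbit-preserving
extended automorphism -/
lemma sum_snd_invariant (St : Finset (ℤ × ℤ)) (w : ℤ × ℤ → ℂ) (x y : K)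
    (hfin : (orbit St w x y).Finite)
    (σ : ↥(orbitF St w x y) ≃ₐ[ℂ] ↥(orbitF St w x y))
    (horb : ∀ a ∈ orbit St w x y,
      (extendAut σ a.1, extendAut σ a.2) ∈ orbit St w x y)
    (f : K → K) :
    ∑ v ∈ Finset.image Prod.snd hfin.toFinset, f (extendAut σ v)
      = ∑ v ∈ Finset.image Prod.snd hfin.toFinset, f v := by
  classical
  set V2 := Finset.image Prod.snd hfin.toFinset with hV2
  have hmaps : ∀ v ∈ V2, extendAut σ v ∈ V2 := by
    intro v hv
    rcases Finset.mem_image.mp hv with ⟨a, ha, rfl⟩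
    have haO : a ∈ orbit St w x y := (Set.Finite.mem_toFinset hfin).mp ha
    exact Finset.mem_image.mpr ⟨(extendAut σ a.1, extendAut σ a.2),
      (Set.Finite.mem_toFinset hfin).mpr (horb a haO), rfl⟩
  have himg : Finset.image (extendAut σ) V2 = V2 :=
    Finset.eq_of_subset_of_card_le (Finset.image_subset_iff.mpr hmaps)
      (le_of_eq (Finset.card_image_of_injective _ (extendAut_injective σ)).symm)
  calc ∑ v ∈ V2, f (extendAut σ v)
      = ∑ u ∈ Finset.image (extendAut σ) V2, f u :=
        (Finset.sum_image fun a _ b _ hab => extendAut_injective σ hab).symm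
    _ = ∑ v ∈ V2, f v := by rw [himg]

end AuxEval

section AuxList2

lemma getLastD_eq_getLast' {α : Type*} : ∀ (l : List α) (a z : α),
    (a :: l).getLastD z = (a :: l).getLast (List.cons_ne_nil a l) := by
  intro l
  induction l with
  | nil => intro a z; rfl
  | cons b t ih =>
    intro a z
    rw [List.getLastD_cons (a := z) (b := a) (l := b :: t), ih b a, List.getLast_cons (List.cons_ne_nil b t)]

lemma getLastD_mem' {α : Type*} (l : List α) (a z : α) :
    (a :: l).getLastD z ∈ a :: l := by
  rw [getLastD_eq_getLast']
  exact List.getLast_mem _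

end AuxList2

section AuxMain

variable {K : Type} [Field K] [Algebra ℂ K]
variable (St : Finset (ℤ × ℤ)) (w : ℤ × ℤ → ℂ) (x y : K)

/-- second coordinates of the (finite) orbit -/
def V2F (hfin : (orbit St w x y).Finite) : Finset K :=
  Finset.image Prod.snd hfin.toFinset

lemma y_mem_V2F (hfin : (orbit St w x y).Finite) : y ∈ V2F St w x y hfin :=
  Finset.mem_image.mpr
    ⟨(x, y), (Set.Finite.mem_toFinset hfin).mpr (self_mem_orbit St w x y), rfl⟩

lemma V2F_card_ne (hfin : (orbit St w x y).Finite) :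
    (((V2F St w x y hfin).card : ℂ)) ≠ 0 := by
  simp only [ne_eq, Nat.cast_eq_zero]
  exact Finset.card_ne_zero_of_mem (y_mem_V2F St w x y hfin)

/-- choice of path data towards each second coordinate -/
lemma exists_paths (hfin : (orbit St w x y).Finite) :
    ∃ Lv : K → List (K × K), ∀ v ∈ V2F St w x y hfin,
      (∀ s ∈ stepsL ((x, y) :: Lv v), Adj St w s.1 s.2) ∧
      (∀ p ∈ (x, y) :: Lv v, p ∈ orbit St w x y) ∧
      (((x, y) :: Lv v).getLastD (x, y)).2 = v := by
  classical
  have hpath : ∀ v : K, ∃ l : List (K × K), v ∈ V2F St w x y hfin →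
      List.Chain (Adj St w) (x, y) l ∧ (((x, y) :: l).getLastD (x, y)).2 = v := by
    intro v
    by_cases hv : v ∈ V2F St w x y hfin
    · rcases Finset.mem_image.mp hv with ⟨a, ha, hav⟩
      have haO : a ∈ orbit St w x y := (Set.Finite.mem_toFinset hfin).mp ha
      obtain ⟨l, hch, hlast⟩ := List.exists_isChain_cons_of_relationReflTransGen haO
      refine ⟨l, fun _ => ⟨hch, ?_⟩⟩
      rw [getLastD_eq_getLast', hlast, hav]
    · exact ⟨[], fun h => absurd h hv⟩
  choose Lv hLv using hpath
  refine ⟨Lv, fun v hv => ⟨stepsL_chain (hLv v hv).1,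
    chain_mem_orbit St w x y (Lv v) (x, y) (self_mem_orbit St w x y) (hLv v hv).1,
    (hLv v hv).2⟩⟩

/-- construction of the `x`-side base chain -/
lemma exists_c0 (hfin : (orbit St w x y).Finite) :
    ∃ c0 : (K × K) →₀ ℂ, ↑c0.support ⊆ orbit St w x y ∧ RatC c0 ∧
      (∀ (f : K → K) (σ : ↥(orbitF St w x y) ≃ₐ[ℂ] ↥(orbitF St w x y)),
        σ ∈ Gx St w x y → Wop (fun a => f a.1) (actChain σ c0) = f x) ∧
      (∀ (f : K → K) (σ : ↥(orbitF St w x y) ≃ₐ[ℂ] ↥(orbitF St w x y)),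
        σ ∈ Gx St w x y → Wop (fun a => f a.2) (actChain σ c0)
          = (((V2F St w x y hfin).card : ℂ))⁻¹ • ∑ v ∈ V2F St w x y hfin, f v) := by
  classical
  obtain ⟨Lv, hLv⟩ := exists_paths St w x y hfin
  set V2 := V2F St w x y hfin with hV2def
  have hqne := V2F_card_ne St w x y hfin
  refine ⟨(V2.card : ℂ)⁻¹ • ∑ v ∈ V2, Dch St w (x, y) ((x, y) :: Lv v), ?_, ?_, ?_, ?_⟩
  · intro p hp
    have hp3 := Finsupp.support_finset_sum (Finsupp.support_smul hp)
    rcases Finset.mem_biUnion.mp hp3 with ⟨v, hv, hpv⟩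
    exact support_Dch St w
      ((hLv v hv).2.1 _ (getLastD_mem' (Lv v) (x, y) (x, y))) (hLv v hv).2.1 hpv
  · have hcast : (((V2.card : ℚ)⁻¹ : ℚ) : ℂ) = (V2.card : ℂ)⁻¹ := by push_cast; rfl
    rw [← hcast]
    exact RatC_smul _ (RatC_finsetSum fun v _ => RatC_Dch St w _ _)
  · intro f σ hσ
    rw [actChain_smul, actChain_sum, map_smul, map_sum]
    have hterm : ∀ v ∈ V2, Wop (fun a => f a.1)
        (actChain σ (Dch St w (x, y) ((x, y) :: Lv v))) = f x := by
      intro v hv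
      rw [Wop_actChain]
      have h := Wop_Dch_x St w
        ((fun a : K × K => f a.1) ∘ Prod.map (extendAut σ) (extendAut σ))
        (x, y) (x, y) (Lv v) (hLv v hv).1
        (fun s _ hX => by
          show f (extendAut σ s.1.1) = f (extendAut σ s.2.1)
          rw [hX.1])
      rw [h]
      show f (extendAut σ x) = f x
      rw [Gx_fix_x St w x y hσ]
    rw [Finset.sum_congr rfl hterm, Finset.sum_const, ← Nat.cast_smul_eq_nsmul ℂ,
      smul_smul, inv_mul_cancel₀ hqne, one_smul]
  · intro f σ hσ
    rw [actChain_smul, actChain_sum, map_smul, map_sum]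
    have hterm : ∀ v ∈ V2, Wop (fun a => f a.2)
        (actChain σ (Dch St w (x, y) ((x, y) :: Lv v))) = f (extendAut σ v) := by
      intro v hv
      rw [Wop_actChain]
      have h := Wop_Dch_y St w
        ((fun a : K × K => f a.2) ∘ Prod.map (extendAut σ) (extendAut σ))
        (x, y) (x, y) (Lv v)
        (fun s _ hY => by
          show f (extendAut σ s.1.2) = f (extendAut σ s.2.2)
          rw [hY.1])
      rw [h]
      show f (extendAut σ (((x, y) :: Lv v).getLastD (x, y)).2) = f (extendAut σ v)
      rw [(hLv v hv).2.2]
    rw [Finset.sum_congr rfl hterm]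
    congr 1
    exact sum_snd_invariant St w x y hfin σ (Gx_maps_orbit St w x y hσ) f

/-- construction of the `y`-side base chain -/
lemma exists_c1 (hfin : (orbit St w x y).Finite) :
    ∃ c1 : (K × K) →₀ ℂ, ↑c1.support ⊆ orbit St w x y ∧ RatC c1 ∧
      (∀ (f : K → K) (σ : ↥(orbitF St w x y) ≃ₐ[ℂ] ↥(orbitF St w x y)),
        σ ∈ Gy St w x y → Wop (fun a => f a.1) (actChain σ c1) = 0) ∧
      (∀ (f : K → K) (σ : ↥(orbitF St w x y) ≃ₐ[ℂ] ↥(orbitF St w x y)),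
        σ ∈ Gy St w x y → Wop (fun a => f a.2) (actChain σ c1)
          = f y - (((V2F St w x y hfin).card : ℂ))⁻¹ • ∑ v ∈ V2F St w x y hfin, f v) := by
  classical
  obtain ⟨Lv, hLv⟩ := exists_paths St w x y hfin
  set V2 := V2F St w x y hfin with hV2def
  have hqne := V2F_card_ne St w x y hfin
  refine ⟨(V2.card : ℂ)⁻¹ • ∑ v ∈ V2, Ech St w ((x, y) :: Lv v), ?_, ?_, ?_, ?_⟩
  · intro p hp
    have hp3 := Finsupp.support_finset_sum (Finsupp.support_smul hp)
    rcases Finset.mem_biUnion.mp hp3 with ⟨v, hv, hpv⟩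
    exact support_Ech St w (hLv v hv).2.1 hpv
  · have hcast : (((V2.card : ℚ)⁻¹ : ℚ) : ℂ) = (V2.card : ℂ)⁻¹ := by push_cast; rfl
    rw [← hcast]
    exact RatC_smul _ (RatC_finsetSum fun v _ => RatC_Ech St w _)
  · intro f σ hσ
    rw [actChain_smul, actChain_sum, map_smul, map_sum]
    have hterm : ∀ v ∈ V2, Wop (fun a => f a.1)
        (actChain σ (Ech St w ((x, y) :: Lv v))) = 0 := by
      intro v hv
      rw [Wop_actChain]
      exact Wop_Ech_x St w
        ((fun a : K × K => f a.1) ∘ Prod.map (extendAut σ) (extendAut σ))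
        (x, y) (Lv v) (hLv v hv).1
        (fun s _ hX => by
          show f (extendAut σ s.1.1) = f (extendAut σ s.2.1)
          rw [hX.1])
    rw [Finset.sum_congr rfl hterm, Finset.sum_const, smul_zero, smul_zero]
  · intro f σ hσ
    rw [actChain_smul, actChain_sum, map_smul, map_sum]
    have hterm : ∀ v ∈ V2, Wop (fun a => f a.2)
        (actChain σ (Ech St w ((x, y) :: Lv v))) = f y - f (extendAut σ v) := by
      intro v hv
      rw [Wop_actChain]
      have h := Wop_Ech_y St w
        ((fun a : K × K => f a.2) ∘ Prod.map (extendAut σ) (extendAut σ))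
        (x, y) (x, y) (Lv v)
        (fun s _ hY => by
          show f (extendAut σ s.1.2) = f (extendAut σ s.2.2)
          rw [hY.1])
      rw [h]
      show f (extendAut σ y) - f (extendAut σ (((x, y) :: Lv v).getLastD (x, y)).2)
          = f y - f (extendAut σ v)
      rw [(hLv v hv).2.2, Gy_fix_y St w x y hσ]
    rw [Finset.sum_congr rfl hterm, Finset.sum_sub_distrib, Finset.sum_const]
    have h2 : ∑ v ∈ V2, f (extendAut σ v) = ∑ v ∈ V2, f v :=
      sum_snd_invariant St w x y hfin σ (Gy_maps_orbit St w x y hσ) f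
    rw [h2, smul_sub, ← Nat.cast_smul_eq_nsmul ℂ, smul_smul, inv_mul_cancel₀ hqne, one_smul]

/-- averaging a chain over a Galois group acting on the finite orbit -/
lemma exists_avg (hfin : (orbit St w x y).Finite)
    (G : Subgroup (↥(orbitF St w x y) ≃ₐ[ℂ] ↥(orbitF St w x y)))
    (hG : ∀ σ ∈ G, ∀ a ∈ orbit St w x y,
      (extendAut σ a.1, extendAut σ a.2) ∈ orbit St w x y)
    (c : (K × K) →₀ ℂ) (hsupp : ↑c.support ⊆ orbit St w x y) (hrat : RatC c) :
    ∃ g : (K × K) →₀ ℂ, ↑g.support ⊆ orbit St w x y ∧ RatC g ∧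
      (∀ τ ∈ G, actChain τ g = g) ∧
      ∀ (e : K) (F : K × K → K),
        (∀ σ : ↥(orbitF St w x y) ≃ₐ[ℂ] ↥(orbitF St w x y),
          σ ∈ G → Wop F (actChain σ c) = e) → Wop F g = e := by
  classical
  have hTfin := actChain_range_finite St w x y hfin G hG c hsupp
  set T : Finset ((K × K) →₀ ℂ) := hTfin.toFinset with hTdef
  have hTmem : ∀ γ, γ ∈ T ↔
      ∃ σ : G, actChain (σ : ↥(orbitF St w x y) ≃ₐ[ℂ] ↥(orbitF St w x y)) c = γ := by
    intro γ
    rw [hTdef, Set.Finite.mem_toFinset]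
    exact Set.mem_range
  have hTmem' : ∀ (ρ : ↥(orbitF St w x y) ≃ₐ[ℂ] ↥(orbitF St w x y)),
      ρ ∈ G → actChain ρ c ∈ T := by
    intro ρ hρ
    exact (hTmem _).mpr ⟨⟨ρ, hρ⟩, rfl⟩
  have hcT : c ∈ T := by
    have h1 := hTmem' 1 (one_mem G)
    rwa [actChain_one] at h1
  have hNne : ((T.card : ℂ)) ≠ 0 := by
    simp only [ne_eq, Nat.cast_eq_zero]
    exact Finset.card_ne_zero_of_mem hcT
  refine ⟨(T.card : ℂ)⁻¹ • ∑ γ ∈ T, γ, ?_, ?_, ?_, ?_⟩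
  · intro p hp
    have hp3 := Finsupp.support_finset_sum (Finsupp.support_smul hp)
    rcases Finset.mem_biUnion.mp hp3 with ⟨γ, hγ, hpγ⟩
    obtain ⟨σ, rfl⟩ := (hTmem γ).mp hγ
    rcases support_actChain _ c hpγ with ⟨a, ha, rfl⟩
    exact hG σ σ.2 a (hsupp ha)
  · have hcast : (((T.card : ℚ)⁻¹ : ℚ) : ℂ) = (T.card : ℂ)⁻¹ := by push_cast; rfl
    rw [← hcast]
    refine RatC_smul _ (RatC_finsetSum fun γ hγ => ?_)
    obtain ⟨σ, rfl⟩ := (hTmem γ).mp hγ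
    exact RatC_mapDomain (pmap_injective _) hrat
  · intro τ hτ
    rw [actChain_smul, actChain_sum]
    congr 1
    have hmaps : ∀ (ρ : ↥(orbitF St w x y) ≃ₐ[ℂ] ↥(orbitF St w x y)),
        ρ ∈ G → ∀ γ ∈ T, actChain ρ γ ∈ T := by
      intro ρ hρ γ hγ
      obtain ⟨σ, hσ⟩ := (hTmem γ).mp hγ
      rw [← hσ, actChain_comp]
      exact hTmem' _ (mul_mem hρ σ.2)
    refine Finset.sum_nbij' (fun γ => actChain τ γ) (fun γ => actChain τ⁻¹ γ)
      (hmaps τ hτ) (hmaps τ⁻¹ (inv_mem hτ)) ?_ ?_ ?_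
    · intro γ _
      show actChain τ⁻¹ (actChain τ γ) = γ
      rw [actChain_comp, inv_mul_cancel, actChain_one]
    · intro γ _
      show actChain τ (actChain τ⁻¹ γ) = γ
      rw [actChain_comp, mul_inv_cancel, actChain_one]
    · intro γ _
      rfl
  · intro e F hF
    rw [map_smul, map_sum]
    have h : ∀ γ ∈ T, Wop F γ = e := by
      intro γ hγ
      obtain ⟨σ, rfl⟩ := (hTmem γ).mp hγ
      exact hF σ σ.2
    rw [Finset.sum_congr rfl h, Finset.sum_const, ← Nat.cast_smul_eq_nsmul ℂ,
      smul_smul, inv_mul_cancel₀ hNne, one_smul]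

end AuxMain


/-- if the orbit is finite, then `(x,y)` admits a decoupling in the
orbit with rational coefficients. -/
theorem stmt19 {K : Type} [Field K] [Algebra ℂ K]
    (St : Finset (ℤ × ℤ)) (w : ℤ × ℤ → ℂ) (x y : K) (mx my : ℕ)
    (hset : Setting St w x y) (hb : ExponentBounds St mx my)
    (hfin : (orbit St w x y).Finite) :
    ∃ gx gy a : (K × K) →₀ ℂ,
      ↑gx.support ⊆ orbit St w x y ∧ ↑gy.support ⊆ orbit St w x y ∧
      ↑a.support ⊆ orbit St w x y ∧
      (∀ p, ∃ q : ℚ, gx p = (q : ℂ)) ∧ (∀ p, ∃ q : ℚ, gy p = (q : ℂ)) ∧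
      (∀ p, ∃ q : ℚ, a p = (q : ℂ)) ∧
      IsDecoupling St w mx my x y gx gy a := by
  classical
  obtain ⟨c0, hsupp0, hrat0, hW01, hW02⟩ := exists_c0 St w x y hfin
  obtain ⟨c1, hsupp1, hrat1, hW11, hW12⟩ := exists_c1 St w x y hfin
  obtain ⟨gx, hsuppgx, hratgx, hinvx, hWgx⟩ := exists_avg St w x y hfin
    (Gx St w x y) (fun σ hσ => Gx_maps_orbit St w x y hσ) c0 hsupp0 hrat0
  obtain ⟨gy, hsuppgy, hratgy, hinvy, hWgy⟩ := exists_avg St w x y hfin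
    (Gy St w x y) (fun σ hσ => Gy_maps_orbit St w x y hσ) c1 hsupp1 hrat1
  have hrat_single : RatC (Finsupp.single (x, y) (1 : ℂ)) := by
    simpa using RatC_single (x, y) 1
  refine ⟨gx, gy, Finsupp.single (x, y) 1 - gx - gy, hsuppgx, hsuppgy, ?_,
    hratgx, hratgy, RatC_sub (RatC_sub hrat_single hratgx) hratgy, ?_, hinvx, hinvy, ?_⟩
  · -- support of a
    intro p hp
    rcases Finset.mem_union.mp (Finsupp.support_sub hp) with hp' | hp'
    · rcases Finset.mem_union.mp (Finsupp.support_sub hp') with hp'' | hp''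
      · rcases Finset.mem_singleton.mp (Finsupp.support_single_subset hp'') with rfl
        exact self_mem_orbit St w x y
      · exact hsuppgx hp''
    · exact hsuppgy hp'
  · -- decomposition
    abel
  · -- cancels decoupled fractions
    intro A₁ B₁ A₂ B₂ hA₁ hB₁ hA₂ hB₂ _ _
    have hsum : ((Finsupp.single (x, y) 1 - gx - gy).sum fun a c => algebraMap ℂ K c *
        (fracEval St w x y A₁ B₁ a + fracEval St w x y A₂ B₂ a))
        = Wop (fun a => fracEval St w x y A₁ B₁ (a.1, y))
            (Finsupp.single (x, y) 1 - gx - gy)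
          + Wop (fun a => fracEval St w x y A₂ B₂ (x, a.2))
            (Finsupp.single (x, y) 1 - gx - gy) := by
      simp only [Wop]
      rw [Finsupp.linearCombination_apply, Finsupp.linearCombination_apply,
        ← Finsupp.sum_add]
      apply Finsupp.sum_congr
      intro p _
      rw [fracEval_fst St w x y hA₁ hB₁ p, fracEval_snd St w x y hA₂ hB₂ p,
        ← Algebra.smul_def, smul_add]
    rw [hsum]
    have h1 : Wop (fun a => fracEval St w x y A₁ B₁ (a.1, y))
        (Finsupp.single (x, y) 1 - gx - gy) = 0 := by
      have e1 := hWgx (fracEval St w x y A₁ B₁ (x, y))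
        (fun a => fracEval St w x y A₁ B₁ (a.1, y))
        (fun σ hσ => hW01 (fun u => fracEval St w x y A₁ B₁ (u, y)) σ hσ)
      have e2 := hWgy 0 (fun a => fracEval St w x y A₁ B₁ (a.1, y))
        (fun σ hσ => hW11 (fun u => fracEval St w x y A₁ B₁ (u, y)) σ hσ)
      rw [map_sub, map_sub, e1, e2, Wop_single, one_smul]
      simp
    have h2 : Wop (fun a => fracEval St w x y A₂ B₂ (x, a.2))
        (Finsupp.single (x, y) 1 - gx - gy) = 0 := by
      set Sm : K := (((V2F St w x y hfin).card : ℂ))⁻¹ •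
        ∑ v ∈ V2F St w x y hfin, fracEval St w x y A₂ B₂ (x, v) with hSm
      have e1 := hWgx Sm (fun a => fracEval St w x y A₂ B₂ (x, a.2))
        (fun σ hσ => hW02 (fun u => fracEval St w x y A₂ B₂ (x, u)) σ hσ)
      have e2 := hWgy (fracEval St w x y A₂ B₂ (x, y) - Sm)
        (fun a => fracEval St w x y A₂ B₂ (x, a.2))
        (fun σ hσ => hW12 (fun u => fracEval St w x y A₂ B₂ (x, u)) σ hσ)
      rw [map_sub, map_sub, e1, e2, Wop_single, one_smul]
      simp
    rw [h1, h2, add_zero]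


end QuadrantWalk
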